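/- arXiv:2012.10046 — 4 statements merged into one kernel-verified Lean document; each statement's English description precedes it below -/
import Mathlib

section
/- Let μ be a probability mass function on S = X₁ × ⋯ × X_N with 1-marginals μ_i and 2-marginals μ_{ij}. Then the block matrix G whose (i,i) diagonal block is diag(μ_i) and whose (i,j) off-diagonal block (i ≠ j) is the matrix μ_{ij}, is positive semidefinite. -/
theorem stmt4 (N : ℕ) (X : Fin N → Type*)
    [∀ i, Fintype (X i)] [∀ i, DecidableEq (X i)]
    (μ : (∀ i, X i) → ℝ) (hpos : ∀ x, 0 ≤ μ x) (hsum : (∑ x, μ x) = 1) :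
    Matrix.PosSemidef (Matrix.of fun p q : Σ i, X i =>
      ∑ x : (∀ k, X k), if x p.1 = p.2 ∧ x q.1 = q.2 then μ x else 0) := by
  rw [Matrix.posSemidef_iff_dotProduct_mulVec]
  constructor
  · ext p q
    simp only [Matrix.conjTranspose_apply, Matrix.of_apply, star_trivial]
    exact Finset.sum_congr rfl fun x _ => if_congr and_comm rfl rfl
  · intro f
    have key : dotProduct (star f) ((Matrix.of fun p q : Σ i, X i =>
        ∑ x : (∀ k, X k), if x p.1 = p.2 ∧ x q.1 = q.2 then μ x else 0).mulVec f)
        = ∑ x : (∀ k, X k), μ x *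
            (∑ p : Σ i, X i, if x p.1 = p.2 then f p else 0) ^ 2 := by
      simp only [dotProduct, Matrix.mulVec, Matrix.of_apply, Pi.star_apply,
        star_trivial, Finset.mul_sum, Finset.sum_mul]
      have hrhs : ∀ x : ∀ k, X k, μ x * (∑ p : Σ i, X i, if x p.1 = p.2 then f p else 0) ^ 2
          = ∑ p : Σ i, X i, ∑ q : Σ i, X i,
              μ x * ((if x p.1 = p.2 then f p else 0) * (if x q.1 = q.2 then f q else 0)) := by
        intro x
        rw [sq, Finset.sum_mul_sum, Finset.mul_sum]
        exact Finset.sum_congr rfl fun p _ => Finset.mul_sum _ _ _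
      simp only [hrhs]
      conv_rhs => rw [Finset.sum_comm]
      refine Finset.sum_congr rfl fun p _ => ?_
      rw [Finset.sum_comm]
      refine Finset.sum_congr rfl fun x _ => Finset.sum_congr rfl fun q _ => ?_
      by_cases h1 : x p.1 = p.2 <;> by_cases h2 : x q.1 = q.2 <;>
        simp [h1, h2] <;> ring
    rw [key]
    exact Finset.sum_nonneg fun x _ => mul_nonneg (hpos x) (sq_nonneg _)
end

section
/- Let μ be a permutation-invariant probability mass function on X^N (X finite, N ≥ 2), with common 1-marginal ρ and common symmetric 2-marginal γ. Then the matrix diag(ρ) + (N−1)γ is positive semidefinite. -/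
lemma aux_precomp {N : ℕ} {X : Type*} [Fintype X] (σ : Equiv.Perm (Fin N))
    (K : (Fin N → X) → ℝ) : ∑ x : Fin N → X, K (x ∘ σ) = ∑ x, K x := by
  exact Equiv.sum_comp (Equiv.arrowCongr σ.symm (Equiv.refl X)) K

lemma aux_pair {N : ℕ} (hN : 2 ≤ N) {X : Type*} [Fintype X]
    (μ : (Fin N → X) → ℝ) (hinv : ∀ (σ : Equiv.Perm (Fin N)) (x : Fin N → X), μ (x ∘ σ) = μ x)
    (i j : Fin N) (hij : i ≠ j) (G : X → X → ℝ) :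
    ∑ x : Fin N → X, μ x * G (x i) (x j)
      = ∑ x : Fin N → X, μ x * G (x ⟨0, lt_of_lt_of_le two_pos hN⟩) (x ⟨1, lt_of_lt_of_le one_lt_two hN⟩) := by
  set i0 : Fin N := ⟨0, by omega⟩
  set i1 : Fin N := ⟨1, by omega⟩
  have h01 : i0 ≠ i1 := by simp [i0, i1, Fin.ext_iff]
  set τ : Equiv.Perm (Fin N) := Equiv.swap i0 i
  have hτ1 : τ i1 ≠ i := by
    by_cases h : i = i1
    · subst h; rw [show τ i1 = i0 from Equiv.swap_apply_right i0 i1]; exact h01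
    · rw [Equiv.swap_apply_of_ne_of_ne h01.symm (Ne.symm h)]; exact Ne.symm h
  set σ : Equiv.Perm (Fin N) := τ.trans (Equiv.swap (τ i1) j)
  have hσ0 : σ i0 = i := by
    simp only [σ, Equiv.trans_apply, τ, Equiv.swap_apply_left]
    exact Equiv.swap_apply_of_ne_of_ne hτ1.symm hij
  have hσ1 : σ i1 = j := by
    simp only [σ, Equiv.trans_apply, Equiv.swap_apply_left]
  calc ∑ x : Fin N → X, μ x * G (x i) (x j)
      = ∑ x : Fin N → X, (fun y => μ y * G (y i0) (y i1)) (x ∘ σ) := by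
        refine Finset.sum_congr rfl fun x _ => ?_
        simp only [Function.comp_apply, hσ0, hσ1, hinv σ x]
    _ = ∑ x : Fin N → X, μ x * G (x i0) (x i1) := by
        simpa using aux_precomp σ (fun y => μ y * G (y i0) (y i1))

lemma aux_single {N : ℕ} (hN : 2 ≤ N) {X : Type*} [Fintype X]
    (μ : (Fin N → X) → ℝ) (hinv : ∀ (σ : Equiv.Perm (Fin N)) (x : Fin N → X), μ (x ∘ σ) = μ x)
    (i : Fin N) (g : X → ℝ) :
    ∑ x : Fin N → X, μ x * g (x i) = ∑ x : Fin N → X, μ x * g (x ⟨0, lt_of_lt_of_le two_pos hN⟩) := by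
  set i0 : Fin N := ⟨0, by omega⟩
  set σ : Equiv.Perm (Fin N) := Equiv.swap i0 i
  calc ∑ x : Fin N → X, μ x * g (x i)
      = ∑ x : Fin N → X, (fun y => μ y * g (y i0)) (x ∘ σ) := by
        refine Finset.sum_congr rfl fun x _ => ?_
        simp only [Function.comp_apply, σ, Equiv.swap_apply_left, hinv]
    _ = _ := by simpa using aux_precomp σ (fun y => μ y * g (y i0))

theorem stmt6 (N : ℕ) (hN : 2 ≤ N) (X : Type*) [Fintype X] [DecidableEq X]
    (μ : (Fin N → X) → ℝ) (hpos : ∀ x, 0 ≤ μ x) (hsum : (∑ x, μ x) = 1)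
    (hinv : ∀ (σ : Equiv.Perm (Fin N)) (x : Fin N → X), μ (x ∘ σ) = μ x) :
    Matrix.PosSemidef (Matrix.of fun a b : X =>
      (if a = b then (∑ x : Fin N → X, if x ⟨0, by omega⟩ = a then μ x else 0) else 0)
      + (N - 1 : ℝ) *
        (∑ x : Fin N → X,
          if x ⟨0, by omega⟩ = a ∧ x ⟨1, by omega⟩ = b then μ x else 0)) := by
  have hi0 : (0 : ℕ) < N := by omega
  have hi1 : (1 : ℕ) < N := by omega
  set i0 : Fin N := ⟨0, hi0⟩ with hi0def
  set i1 : Fin N := ⟨1, hi1⟩ with hi1def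
  have h01 : i0 ≠ i1 := by simp [hi0def, hi1def, Fin.ext_iff]
  set ρ : X → ℝ := fun a => ∑ x : Fin N → X, if x i0 = a then μ x else 0 with hρ
  set γ : X → X → ℝ := fun a b =>
    ∑ x : Fin N → X, if x i0 = a ∧ x i1 = b then μ x else 0 with hγ
  show Matrix.PosSemidef (Matrix.of fun a b : X =>
      (if a = b then ρ a else 0) + (N - 1 : ℝ) * γ a b)
  -- γ rewritten multiplicatively
  have hγ' : ∀ a b : X, γ a b
      = ∑ x : Fin N → X, μ x * (if x i0 = a then (1:ℝ) else 0) * (if x i1 = b then 1 else 0) := by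
    intro a b
    refine Finset.sum_congr rfl fun x _ => ?_
    by_cases h1 : x i0 = a <;> by_cases h2 : x i1 = b <;> simp [h1, h2]
  have hγsymm : ∀ a b : X, γ b a = γ a b := by
    intro a b
    have key := aux_pair hN μ hinv i1 i0 (Ne.symm h01)
      (fun u v => (if v = a then (1:ℝ) else 0) * (if u = b then 1 else 0))
    rw [hγ' b a, hγ' a b]
    calc ∑ x : Fin N → X, μ x * (if x i0 = b then (1:ℝ) else 0) * (if x i1 = a then 1 else 0)
        = ∑ x : Fin N → X, μ x *
            ((if x i1 = a then (1:ℝ) else 0) * (if x i0 = b then 1 else 0)) :=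
          Finset.sum_congr rfl fun x _ => by ring
      _ = ∑ x : Fin N → X, μ x *
            ((if x i0 = a then (1:ℝ) else 0) * (if x i1 = b then 1 else 0)) := key.symm
      _ = ∑ x : Fin N → X, μ x * (if x i0 = a then (1:ℝ) else 0) * (if x i1 = b then 1 else 0) :=
          Finset.sum_congr rfl fun x _ => by ring
  refine Matrix.PosSemidef.of_dotProduct_mulVec_nonneg ?_ ?_
  · -- Hermitian
    ext a b
    simp only [Matrix.conjTranspose_apply, Matrix.of_apply, star_trivial]
    rw [hγsymm b a]
    by_cases h : a = b
    · subst h; ring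
    · rw [if_neg h, if_neg (Ne.symm h)]
  · -- positivity of quadratic form
    intro f
    set Q : ℝ := ∑ x : Fin N → X, μ x * (f (x i0) * f (x i0)) with hQ
    set C : ℝ := ∑ x : Fin N → X, μ x * (f (x i0) * f (x i1)) with hC
    -- quadratic form equals Q + (N-1) * C
    have l1 : ∑ a : X, f a * (ρ a * f a) = Q := by
      rw [hρ, hQ]
      simp only [Finset.sum_mul, Finset.mul_sum, ite_mul, mul_ite, zero_mul, mul_zero]
      rw [Finset.sum_comm]
      refine Finset.sum_congr rfl fun x _ => ?_
      rw [Finset.sum_ite_eq Finset.univ (x i0) (fun a => f a * (μ x * f a))]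
      simp only [Finset.mem_univ, if_true]
      ring
    have l2 : ∑ a : X, f a * ∑ b : X, γ a b * f b = C := by
      rw [hγ, hC]
      simp only [Finset.sum_mul, Finset.mul_sum, ite_mul, mul_ite, zero_mul, mul_zero]
      calc ∑ a : X, ∑ b : X, ∑ x : Fin N → X,
              (if x i0 = a ∧ x i1 = b then f a * (μ x * f b) else 0)
          = ∑ a : X, ∑ x : Fin N → X, ∑ b : X,
              (if x i0 = a ∧ x i1 = b then f a * (μ x * f b) else 0) :=
            Finset.sum_congr rfl fun a _ => Finset.sum_comm
        _ = ∑ x : Fin N → X, ∑ a : X, ∑ b : X,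
              (if x i0 = a ∧ x i1 = b then f a * (μ x * f b) else 0) := Finset.sum_comm
        _ = ∑ x : Fin N → X, μ x * (f (x i0) * f (x i1)) := by
            refine Finset.sum_congr rfl fun x _ => ?_
            simp only [ite_and]
            have inner : ∀ a : X, (∑ b : X,
                if x i0 = a then if x i1 = b then f a * (μ x * f b) else 0 else 0)
                = if x i0 = a then f a * (μ x * f (x i1)) else 0 := by
              intro a
              by_cases h : x i0 = a
              · rw [Finset.sum_congr rfl fun b _ => if_pos h,
                  Finset.sum_ite_eq Finset.univ (x i1) (fun b => f a * (μ x * f b))]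
                simp [h]
              · simp [if_neg h]
            rw [Finset.sum_congr rfl fun a _ => inner a,
              Finset.sum_ite_eq Finset.univ (x i0) (fun a => f a * (μ x * f (x i1)))]
            simp only [Finset.mem_univ, if_true]
            ring
    have hQF : dotProduct (star f) ((Matrix.of fun a b : X =>
        (if a = b then ρ a else 0) + (N - 1 : ℝ) * γ a b).mulVec f) = Q + ((N:ℝ) - 1) * C := by
      simp only [dotProduct, Matrix.mulVec, Matrix.of_apply, Pi.star_apply, star_trivial]
      have step : ∀ a : X, (∑ b : X, ((if a = b then ρ a else 0) + ((N:ℝ) - 1) * γ a b) * f b)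
          = ρ a * f a + ((N:ℝ)-1) * ∑ b : X, γ a b * f b := by
        intro a
        simp only [add_mul, Finset.sum_add_distrib, ite_mul, zero_mul]
        congr 1
        · rw [Finset.sum_ite_eq Finset.univ a (fun b => ρ a * f b)]
          simp
        · rw [Finset.mul_sum]
          exact Finset.sum_congr rfl fun b _ => by ring
      calc ∑ a : X, f a * ∑ b : X, ((if a = b then ρ a else 0) + ((N:ℝ) - 1) * γ a b) * f b
          = ∑ a : X, (f a * (ρ a * f a) + ((N:ℝ)-1) * (f a * ∑ b : X, γ a b * f b)) := by
            refine Finset.sum_congr rfl fun a _ => ?_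
            rw [step a]; ring
        _ = (∑ a : X, f a * (ρ a * f a))
              + ((N:ℝ)-1) * ∑ a : X, f a * ∑ b : X, γ a b * f b := by
            rw [Finset.sum_add_distrib, Finset.mul_sum]
        _ = Q + ((N:ℝ) - 1) * C := by rw [l1, l2]
    have hE : ∑ x : Fin N → X, μ x * ((∑ k, f (x k)) * (∑ l, f (x l)))
        = (N:ℝ) * Q + (N:ℝ) * ((N:ℝ) - 1) * C := by
      calc ∑ x : Fin N → X, μ x * ((∑ k, f (x k)) * (∑ l, f (x l)))
          = ∑ x : Fin N → X, ∑ k : Fin N, ∑ l : Fin N, μ x * (f (x k) * f (x l)) := by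
            refine Finset.sum_congr rfl fun x _ => ?_
            rw [Finset.sum_mul_sum, Finset.mul_sum]
            exact Finset.sum_congr rfl fun k _ => by rw [Finset.mul_sum]
        _ = ∑ k : Fin N, ∑ l : Fin N, ∑ x : Fin N → X, μ x * (f (x k) * f (x l)) := by
            rw [Finset.sum_comm]
            exact Finset.sum_congr rfl fun k _ => Finset.sum_comm
        _ = ∑ k : Fin N, ∑ l : Fin N, (if k = l then Q else C) := by
            refine Finset.sum_congr rfl fun k _ => Finset.sum_congr rfl fun l _ => ?_
            by_cases h : k = l
            · subst h
              rw [if_pos rfl, hQ]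
              exact aux_single hN μ hinv k (fun u => f u * f u)
            · rw [if_neg h, hC]
              exact aux_pair hN μ hinv k l h (fun u v => f u * f v)
        _ = ∑ _k : Fin N, (Q + ((N:ℝ) - 1) * C) := by
            refine Finset.sum_congr rfl fun k _ => ?_
            have hsplit : ∀ l : Fin N, (if k = l then Q else C)
                = (if k = l then Q - C else 0) + C := fun l => by split <;> ring
            rw [Finset.sum_congr rfl fun l _ => hsplit l, Finset.sum_add_distrib,
              Finset.sum_ite_eq Finset.univ k (fun _ => Q - C)]
            simp only [Finset.mem_univ, if_true, Finset.sum_const, Finset.card_univ,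
              Fintype.card_fin, nsmul_eq_mul]
            ring
        _ = (N:ℝ) * Q + (N:ℝ) * ((N:ℝ) - 1) * C := by
            simp only [Finset.sum_const, Finset.card_univ, Fintype.card_fin, nsmul_eq_mul]
            ring
    have hE0 : 0 ≤ ∑ x : Fin N → X, μ x * ((∑ k, f (x k)) * (∑ l, f (x l))) :=
      Finset.sum_nonneg fun x _ => mul_nonneg (hpos x) (mul_self_nonneg _)
    rw [hQF]
    have hN0 : (0:ℝ) < (N:ℝ) := by exact_mod_cast Nat.pos_of_ne_zero (by omega)
    nlinarith [hE0, hE, hN0]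
end

section
/- Let G be a layered directed graph with layers V₁,…,V_N where V₁ and V_N are singletons, edges only between consecutive layers, and edge weights given by matrices H_{i,i+1}. If the shortest path from the source (in V₁) to the destination (in V_N) is unique and passes through vertices x₁⋆,…,x_N⋆, then the linear program minimizing ∑_{i=1}^{N−1} Tr[H_{i,i+1}ᵀ μ_{i,i+1}] over nonnegative matrices μ_{i,i+1} satisfying the flow consistency constraints μ_{i,i+1}ᵀ 1 = μ_{i+1,i+2} 1 for all i, μ_{1,2} 1 = δ_{x₁⋆}, and μ_{N−1,N}ᵀ 1 = δ_{x_N⋆}, has the unique optimal solution μ_{i,i+1} = δ_{x_i⋆} δ_{x_{i+1}⋆}ᵀ. -/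
/-- Total weight of a path `x` through the layers `V 0, …, V (N-1)` with
edge weights `W i : V i → V (i+1) → ℝ`. -/
def PathWeight (N : ℕ) {V : ℕ → Type*} (W : ∀ i, V i → V (i + 1) → ℝ)
    (x : ∀ i, V i) : ℝ :=
  ∑ i ∈ Finset.range (N - 1), W i (x i) (x (i + 1))

/-- Objective of the shortest-path linear program. -/
def SPObj (N : ℕ) {V : ℕ → Type*} [∀ i, Fintype (V i)]
    (W : ∀ i, V i → V (i + 1) → ℝ) (μ : ∀ i, V i → V (i + 1) → ℝ) : ℝ :=
  ∑ i ∈ Finset.range (N - 1), ∑ a, ∑ b, W i a b * μ i a b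

/-- Feasibility for the shortest-path linear program: nonnegativity, flow
consistency between consecutive pairs of layers, and source/destination
(delta) constraints at `xs 0` and `xs (N-1)`. -/
def SPFeasible (N : ℕ) (hN : 2 ≤ N) {V : ℕ → Type*} [∀ i, Fintype (V i)]
    [∀ i, DecidableEq (V i)]
    (xs : ∀ i, V i) (μ : ∀ i, V i → V (i + 1) → ℝ) : Prop :=
  (∀ i < N - 1, ∀ (a : V i) (b : V (i + 1)), 0 ≤ μ i a b) ∧
  (∀ i, i + 1 < N - 1 → ∀ b : V (i + 1),
    (∑ a, μ i a b) = ∑ c, μ (i + 1) b c) ∧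
  (∀ a : V 0, (∑ b, μ 0 a b) = if a = xs 0 then 1 else 0) ∧
  (∀ b : V (N - 2 + 1), (∑ a, μ (N - 2) a b) =
    if cast (congrArg V (by omega : N - 2 + 1 = N - 1)) b = xs (N - 1)
    then 1 else 0)


noncomputable section SPaux
variable {V : ℕ → Type*} [∀ i, Fintype (V i)] [∀ i, DecidableEq (V i)]

/-- Extend a restricted path on `Fin N` to all of `ℕ` using `xs` as default. -/
def spExt (N : ℕ) (xs : ∀ i, V i) (y : ∀ j : Fin N, V j) (j : ℕ) : V j :=
  if h : j < N then y ⟨j, h⟩ else xs j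

/-- Weight of the suffix of a path starting at layer `i`. -/
def spSuf (N : ℕ) (W : ∀ i, V i → V (i + 1) → ℝ) (i : ℕ) (z : ∀ j, V j) : ℝ :=
  ∑ j ∈ Finset.Ico i (N - 1), W j (z j) (z (j + 1))

/-- Restricted paths passing through `v` at layer `i`. -/
def spS (N : ℕ) (xs : ∀ i, V i) (i : ℕ) (v : V i) : Finset (∀ j : Fin N, V j) :=
  Finset.univ.filter (fun y => spExt N xs y i = v)

/-- Minimal suffix weight from `(i, v)` to the end. -/
def spE (N : ℕ) (W : ∀ i, V i → V (i + 1) → ℝ) (xs : ∀ i, V i) (i : ℕ) (v : V i) : ℝ :=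
  if h : (spS N xs i v).Nonempty then
    (spS N xs i v).inf' h (fun y => spSuf N W i (spExt N xs y)) else 0

lemma spS_nonempty (N : ℕ) (xs : ∀ i, V i) {i : ℕ} (hiN : i < N) (v : V i) :
    (spS N xs i v).Nonempty := by
  refine ⟨fun j => if h : (j : ℕ) = i then cast (congrArg V h).symm v else xs j, ?_⟩
  simp [spS, spExt, hiN]

lemma spE_le (N : ℕ) (W : ∀ i, V i → V (i + 1) → ℝ) (xs : ∀ i, V i) {i : ℕ}
    (y : ∀ j : Fin N, V j) :
    spE N W xs i (spExt N xs y i) ≤ spSuf N W i (spExt N xs y) := by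
  have hmem : y ∈ spS N xs i (spExt N xs y i) := by simp [spS]
  rw [spE, dif_pos ⟨y, hmem⟩]
  exact Finset.inf'_le _ hmem

lemma spE_attained (N : ℕ) (W : ∀ i, V i → V (i + 1) → ℝ) (xs : ∀ i, V i) {i : ℕ}
    (hiN : i < N) (v : V i) :
    ∃ y : ∀ j : Fin N, V j, spExt N xs y i = v ∧
      spE N W xs i v = spSuf N W i (spExt N xs y) := by
  have hne := spS_nonempty N xs hiN v
  rw [spE, dif_pos hne]
  obtain ⟨y, hy, hval⟩ := Finset.exists_mem_eq_inf' hne (fun y => spSuf N W i (spExt N xs y))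
  exact ⟨y, by simpa [spS] using hy, hval⟩

lemma spE_zero (N : ℕ) (W : ∀ i, V i → V (i + 1) → ℝ) (xs : ∀ i, V i) {k : ℕ}
    (hkN : k < N) (hk : N - 1 ≤ k) (v : V k) : spE N W xs k v = 0 := by
  rw [spE, dif_pos (spS_nonempty N xs hkN v)]
  have h0 : ∀ y ∈ spS N xs k v, spSuf N W k (spExt N xs y) = 0 := by
    intro y _
    simp [spSuf, Finset.Ico_eq_empty_of_le hk]
  rw [Finset.inf'_congr (t := spS N xs k v) (spS_nonempty N xs hkN v) rfl h0]
  exact Finset.inf'_const _ _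

lemma spExt_update_ne (N : ℕ) (xs : ∀ i, V i) (y : ∀ j : Fin N, V j) {i : ℕ} (a : V i)
    {j : ℕ} (hj : j ≠ i) :
    spExt N xs (fun k => if h : (k : ℕ) = i then cast (congrArg V h).symm a else y k) j
      = spExt N xs y j := by
  unfold spExt
  split
  · simp [hj]
  · rfl

lemma spExt_update_eq (N : ℕ) (xs : ∀ i, V i) (y : ∀ j : Fin N, V j) {i : ℕ} (hiN : i < N)
    (a : V i) :
    spExt N xs (fun k => if h : (k : ℕ) = i then cast (congrArg V h).symm a else y k) i
      = a := by
  simp [spExt, hiN]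

lemma spE_bellman (N : ℕ) (W : ∀ i, V i → V (i + 1) → ℝ) (xs : ∀ i, V i) {i : ℕ}
    (hi : i + 1 < N) (a : V i) (b : V (i + 1)) :
    spE N W xs i a ≤ W i a b + spE N W xs (i + 1) b := by
  obtain ⟨y, hyb, hval⟩ := spE_attained N W xs hi b
  set y' : ∀ j : Fin N, V j :=
    fun k => if h : (k : ℕ) = i then cast (congrArg V h).symm a else y k with hy'
  have hext_i : spExt N xs y' i = a := spExt_update_eq N xs y (by omega) a
  have hext_ne : ∀ j : ℕ, j ≠ i → spExt N xs y' j = spExt N xs y j :=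
    fun j hj => spExt_update_ne N xs y a hj
  have hsplit : spSuf N W i (spExt N xs y') = W i a b + spSuf N W (i + 1) (spExt N xs y) := by
    unfold spSuf
    rw [Finset.sum_eq_sum_Ico_succ_bot (by omega : i < N - 1)]
    congr 1
    · rw [hext_i, hext_ne (i+1) (by omega), hyb]
    · apply Finset.sum_congr rfl
      intro j hj
      simp only [Finset.mem_Ico] at hj
      rw [hext_ne j (by omega), hext_ne (j+1) (by omega)]
  calc spE N W xs i a = spE N W xs i (spExt N xs y' i) := by rw [hext_i]
    _ ≤ spSuf N W i (spExt N xs y') := spE_le N W xs y'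
    _ = W i a b + spE N W xs (i + 1) b := by rw [hsplit, hval]

lemma spExt_self (N : ℕ) (xs : ∀ i, V i) :
    spExt N xs (fun j : Fin N => xs j) = fun j => xs j := by
  funext j
  unfold spExt
  split <;> rfl

lemma spE_xs_le (N : ℕ) (W : ∀ i, V i → V (i + 1) → ℝ) (xs : ∀ i, V i) (i : ℕ) :
    spE N W xs i (xs i) ≤ spSuf N W i xs := by
  have h := spE_le N W xs (i := i) (fun j : Fin N => xs j)
  rwa [spExt_self] at h

lemma spE_xs (N : ℕ) (W : ∀ i, V i → V (i + 1) → ℝ) (xs : ∀ i, V i)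
    (huniq : ∀ y : ∀ i, V i, (∃ i < N, y i ≠ xs i) →
      PathWeight N W xs < PathWeight N W y) {i : ℕ} (hiN : i < N) :
    spE N W xs i (xs i) = spSuf N W i xs := by
  refine le_antisymm (spE_xs_le N W xs i) ?_
  by_contra hlt
  push_neg at hlt
  obtain ⟨y, hyi, hval⟩ := spE_attained N W xs hiN (xs i)
  set z : ∀ j, V j := fun j => if h : j < i then xs j else spExt N xs y j with hz
  have hz_ge : ∀ j, i ≤ j → z j = spExt N xs y j := by
    intro j hj; simp [hz, Nat.not_lt.mpr hj]
  have hz_le : ∀ j, j ≤ i → z j = xs j := by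
    intro j hj
    rcases lt_or_eq_of_le hj with h | h
    · simp [hz, h]
    · subst h; rw [hz_ge j le_rfl, hyi]
  have hPWz : PathWeight N W z = (∑ j ∈ Finset.range i, W j (xs j) (xs (j+1)))
      + spE N W xs i (xs i) := by
    unfold PathWeight
    rw [Finset.range_eq_Ico, ← Finset.sum_Ico_consecutive _ (Nat.zero_le i) (by omega : i ≤ N - 1)]
    congr 1
    · rw [← Finset.range_eq_Ico]
      apply Finset.sum_congr rfl
      intro j hj
      simp only [Finset.mem_range] at hj
      rw [hz_le j (by omega), hz_le (j+1) (by omega)]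
    · rw [hval]
      apply Finset.sum_congr rfl
      intro j hj
      simp only [Finset.mem_Ico] at hj
      rw [hz_ge j (by omega), hz_ge (j+1) (by omega)]
  have hPWxs : PathWeight N W xs = (∑ j ∈ Finset.range i, W j (xs j) (xs (j+1)))
      + spSuf N W i xs := by
    unfold PathWeight spSuf
    rw [Finset.range_eq_Ico, ← Finset.sum_Ico_consecutive _ (Nat.zero_le i) (by omega : i ≤ N - 1), ← Finset.range_eq_Ico]
  have hlt2 : PathWeight N W z < PathWeight N W xs := by
    rw [hPWz, hPWxs]; linarith
  by_cases hdiff : ∃ j < N, z j ≠ xs j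
  · exact absurd (huniq z hdiff) (not_lt.mpr hlt2.le)
  · push_neg at hdiff
    have : PathWeight N W z = PathWeight N W xs := by
      unfold PathWeight
      apply Finset.sum_congr rfl
      intro j hj
      simp only [Finset.mem_range] at hj
      rw [hdiff j (by omega), hdiff (j+1) (by omega)]
    linarith

lemma spEdge (N : ℕ) (W : ∀ i, V i → V (i + 1) → ℝ) (xs : ∀ i, V i)
    (huniq : ∀ y : ∀ i, V i, (∃ i < N, y i ≠ xs i) →
      PathWeight N W xs < PathWeight N W y)
    {i : ℕ} (hi : i < N - 1) {b : V (i + 1)} (hb : b ≠ xs (i + 1))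
    (htight : spE N W xs i (xs i) = W i (xs i) b + spE N W xs (i + 1) b) : False := by
  have hi1N : i + 1 < N := by omega
  obtain ⟨y, hyb, hval⟩ := spE_attained N W xs hi1N b
  set z : ∀ j, V j := fun j => if h : j ≤ i then xs j else spExt N xs y j with hz
  have hz_le : ∀ j, j ≤ i → z j = xs j := by intro j hj; simp [hz, hj]
  have hz_ge : ∀ j, i < j → z j = spExt N xs y j := by
    intro j hj; simp [hz, Nat.not_le.mpr hj]
  have hzi1 : z (i + 1) = b := by rw [hz_ge (i+1) (by omega), hyb]
  have hPWz : PathWeight N W z = (∑ j ∈ Finset.range i, W j (xs j) (xs (j+1)))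
      + W i (xs i) b + spE N W xs (i + 1) b := by
    unfold PathWeight
    rw [Finset.range_eq_Ico,
      ← Finset.sum_Ico_consecutive _ (Nat.zero_le (i+1)) (by omega : i + 1 ≤ N - 1),
      ← Finset.range_eq_Ico, Finset.sum_range_succ]
    congr 1
    · congr 1
      · apply Finset.sum_congr rfl
        intro j hj
        simp only [Finset.mem_range] at hj
        rw [hz_le j (by omega), hz_le (j+1) (by omega)]
      · rw [hz_le i le_rfl, hzi1]
    · rw [hval]
      apply Finset.sum_congr rfl
      intro j hj
      simp only [Finset.mem_Ico] at hj
      rw [hz_ge j (by omega), hz_ge (j+1) (by omega)]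
  have hPWxs : PathWeight N W xs = (∑ j ∈ Finset.range i, W j (xs j) (xs (j+1)))
      + spSuf N W i xs := by
    unfold PathWeight spSuf
    rw [Finset.range_eq_Ico, ← Finset.sum_Ico_consecutive _ (Nat.zero_le i) (by omega : i ≤ N - 1), ← Finset.range_eq_Ico]
  have hE : spE N W xs i (xs i) = spSuf N W i xs := spE_xs N W xs huniq (by omega)
  have heq : PathWeight N W z = PathWeight N W xs := by
    rw [hPWz, hPWxs, ← hE, htight]; ring
  have hne : ∃ j < N, z j ≠ xs j := ⟨i + 1, hi1N, by rw [hzi1]; exact hb⟩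
  have := huniq z hne
  rw [heq] at this
  exact lt_irrefl _ this

lemma spKey (N : ℕ) (hN : 2 ≤ N) (W : ∀ i, V i → V (i + 1) → ℝ) (xs : ∀ i, V i)
    (μ : ∀ i, V i → V (i + 1) → ℝ)
    (hflow : ∀ i, i + 1 < N - 1 → ∀ b : V (i + 1),
      (∑ a, μ i a b) = ∑ c, μ (i + 1) b c)
    (hsrc : ∀ a : V 0, (∑ b, μ 0 a b) = if a = xs 0 then 1 else 0) :
    SPObj N W μ = spE N W xs 0 (xs 0) +
      ∑ i ∈ Finset.range (N - 1), ∑ a, ∑ b,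
        μ i a b * (W i a b + spE N W xs (i + 1) b - spE N W xs i a) := by
  set f : ℕ → ℝ := fun i => if i < N - 1 then
    ∑ a, (∑ b, μ i a b) * spE N W xs i a else 0 with hf
  have hA : ∀ i, i < N - 1 → (∑ a, ∑ b, μ i a b * spE N W xs i a) = f i := by
    intro i hi
    rw [hf]
    simp only [if_pos hi]
    exact Finset.sum_congr rfl fun a _ => (Finset.sum_mul _ _ _).symm
  have hB : ∀ i, i < N - 1 → (∑ a, ∑ b, μ i a b * spE N W xs (i + 1) b) = f (i + 1) := by
    intro i hi
    rw [Finset.sum_comm, hf]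
    by_cases h : i + 1 < N - 1
    · simp only [if_pos h]
      refine Finset.sum_congr rfl fun b _ => ?_
      rw [← hflow i h b, Finset.sum_mul]
    · simp only [if_neg h]
      refine Finset.sum_eq_zero fun b _ => Finset.sum_eq_zero fun a _ => ?_
      rw [spE_zero N W xs (by omega) (by omega), mul_zero]
  have hsum : ∑ i ∈ Finset.range (N - 1), ∑ a, ∑ b,
      μ i a b * (W i a b + spE N W xs (i + 1) b - spE N W xs i a)
      = SPObj N W μ + ∑ i ∈ Finset.range (N - 1), (f (i + 1) - f i) := by
    unfold SPObj
    rw [← Finset.sum_add_distrib]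
    refine Finset.sum_congr rfl fun i hi => ?_
    simp only [Finset.mem_range] at hi
    rw [← hA i hi, ← hB i hi]
    have hpt : ∀ a : V i, ∀ b : V (i+1),
        μ i a b * (W i a b + spE N W xs (i + 1) b - spE N W xs i a)
        = W i a b * μ i a b + (μ i a b * spE N W xs (i + 1) b
          - μ i a b * spE N W xs i a) := fun a b => by ring
    simp_rw [hpt, Finset.sum_add_distrib, Finset.sum_sub_distrib]
  have htel : ∑ i ∈ Finset.range (N - 1), (f (i + 1) - f i) = f (N - 1) - f 0 :=
    Finset.sum_range_sub f (N - 1)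
  have hfN : f (N - 1) = 0 := by rw [hf]; simp
  have hf0 : f 0 = spE N W xs 0 (xs 0) := by
    rw [hf]
    simp only [if_pos (by omega : 0 < N - 1)]
    simp [hsrc, ite_mul]
  rw [hsum, htel, hfN, hf0] at *
  linarith [hsum]

end SPaux

theorem stmt11 (N : ℕ) (hN : 2 ≤ N) (V : ℕ → Type*)
    [∀ i, Fintype (V i)] [∀ i, DecidableEq (V i)]
    (hV0 : Fintype.card (V 0) = 1) (hVN : Fintype.card (V (N - 1)) = 1)
    (W : ∀ i, V i → V (i + 1) → ℝ)
    (xs : ∀ i, V i)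
    (huniq : ∀ y : ∀ i, V i, (∃ i < N, y i ≠ xs i) →
      PathWeight N W xs < PathWeight N W y) :
    SPFeasible N hN xs
      (fun i a b => if a = xs i ∧ b = xs (i + 1) then (1 : ℝ) else 0) ∧
    (∀ μ : ∀ i, V i → V (i + 1) → ℝ, SPFeasible N hN xs μ →
      SPObj N W (fun i a b => if a = xs i ∧ b = xs (i + 1) then (1 : ℝ) else 0)
        ≤ SPObj N W μ) ∧
    (∀ μ : ∀ i, V i → V (i + 1) → ℝ, SPFeasible N hN xs μ →
      SPObj N W μ =
        SPObj N W (fun i a b => if a = xs i ∧ b = xs (i + 1) then (1 : ℝ) else 0) →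
      ∀ i < N - 1, ∀ (a : V i) (b : V (i + 1)),
        μ i a b = if a = xs i ∧ b = xs (i + 1) then (1 : ℝ) else 0) := by
  have hPW : PathWeight N W xs = spE N W xs 0 (xs 0) := by
    rw [spE_xs N W xs huniq (by omega : 0 < N)]
    unfold PathWeight spSuf
    rw [Finset.range_eq_Ico]
  have hobjs : SPObj N W (fun i a b => if a = xs i ∧ b = xs (i + 1) then (1 : ℝ) else 0)
      = PathWeight N W xs := by
    unfold SPObj PathWeight
    refine Finset.sum_congr rfl fun i _ => ?_
    simp [ite_and, mul_ite, Finset.sum_ite_eq']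
  -- nonnegativity of the correction terms
  have hterm : ∀ (μ : ∀ i, V i → V (i + 1) → ℝ), SPFeasible N hN xs μ →
      ∀ i ∈ Finset.range (N - 1), ∀ a : V i, ∀ b : V (i + 1),
        0 ≤ μ i a b * (W i a b + spE N W xs (i + 1) b - spE N W xs i a) := by
    intro μ hfeas i hi a b
    simp only [Finset.mem_range] at hi
    refine mul_nonneg (hfeas.1 i hi a b) ?_
    have := spE_bellman N W xs (by omega : i + 1 < N) a b
    linarith
  refine ⟨?_, ?_, ?_⟩
  · -- feasibility of the indicator solution
    refine ⟨fun i _ a b => ?_, fun i _ b => ?_, fun a => ?_, ?_⟩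
    · dsimp only
      split <;> norm_num
    · simp [ite_and, Finset.sum_ite_eq']
    · simp [ite_and, Finset.sum_ite_eq']
    · obtain ⟨M, rfl⟩ : ∃ M, N = M + 2 := ⟨N - 2, by omega⟩
      intro b
      show (∑ a, if a = xs M ∧ b = xs (M + 1) then (1 : ℝ) else 0)
        = if b = xs (M + 1) then 1 else 0
      simp [ite_and, Finset.sum_ite_eq']
  · -- optimality
    intro μ hfeas
    rw [hobjs, hPW, spKey N hN W xs μ hfeas.2.1 hfeas.2.2.1]
    have h0 : 0 ≤ ∑ i ∈ Finset.range (N - 1), ∑ a, ∑ b,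
        μ i a b * (W i a b + spE N W xs (i + 1) b - spE N W xs i a) :=
      Finset.sum_nonneg fun i hi => Finset.sum_nonneg fun a _ =>
        Finset.sum_nonneg fun b _ => hterm μ hfeas i hi a b
    linarith
  · -- uniqueness
    intro μ hfeas heq
    obtain ⟨hpos, hflow, hsrc, _⟩ := hfeas
    have hS0 : ∑ i ∈ Finset.range (N - 1), ∑ a, ∑ b,
        μ i a b * (W i a b + spE N W xs (i + 1) b - spE N W xs i a) = 0 := by
      have := spKey N hN W xs μ hflow hsrc
      rw [heq, hobjs, hPW] at this
      linarith
    have hcs : ∀ i, i < N - 1 → ∀ a : V i, ∀ b : V (i + 1),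
        μ i a b * (W i a b + spE N W xs (i + 1) b - spE N W xs i a) = 0 := by
      intro i hi a b
      have h1 := (Finset.sum_eq_zero_iff_of_nonneg fun i hi =>
        Finset.sum_nonneg fun a _ => Finset.sum_nonneg fun b _ =>
          hterm μ ⟨hpos, hflow, hsrc, by assumption⟩ i hi a b).mp hS0 i
          (Finset.mem_range.mpr hi)
      have h2 := (Finset.sum_eq_zero_iff_of_nonneg fun a _ =>
        Finset.sum_nonneg fun b _ =>
          hterm μ ⟨hpos, hflow, hsrc, by assumption⟩ i (Finset.mem_range.mpr hi) a b).mp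
          h1 a (Finset.mem_univ a)
      exact (Finset.sum_eq_zero_iff_of_nonneg fun b _ =>
        hterm μ ⟨hpos, hflow, hsrc, by assumption⟩ i (Finset.mem_range.mpr hi) a b).mp
        h2 b (Finset.mem_univ b)
    -- no flow leaves the optimal path
    have hedge : ∀ i, i < N - 1 → ∀ b : V (i + 1), b ≠ xs (i + 1) → μ i (xs i) b = 0 := by
      intro i hi b hb
      by_contra hne
      have htight : spE N W xs i (xs i) = W i (xs i) b + spE N W xs (i + 1) b := by
        rcases mul_eq_zero.mp (hcs i hi (xs i) b) with h' | h'
        · exact absurd h' hne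
        · linarith
      exact spEdge N W xs huniq hi hb htight
    -- inductive invariant: all mass on the optimal path
    have hinv : ∀ i, i < N - 1 →
        (∀ a : V i, a ≠ xs i → ∀ b, μ i a b = 0) ∧ (∑ b, μ i (xs i) b = 1) := by
      intro i
      induction i with
      | zero =>
        intro _
        constructor
        · intro a ha b
          exact absurd (Fintype.card_le_one_iff.mp hV0.le a (xs 0)) ha
        · simpa using hsrc (xs 0)
      | succ i ih =>
        intro h
        have hiN : i < N - 1 := by omega
        obtain ⟨h1, h2⟩ := ih hiN
        have hin : ∀ b : V (i + 1), (∑ a, μ i a b) = if b = xs (i + 1) then 1 else 0 := by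
          intro b
          have hsum : ∑ a, μ i a b = μ i (xs i) b :=
            Finset.sum_eq_single (xs i) (fun a _ ha => h1 a ha b) (by simp)
          by_cases hb : b = xs (i + 1)
          · subst hb
            rw [if_pos rfl, hsum]
            have hone : ∑ b', μ i (xs i) b' = μ i (xs i) (xs (i + 1)) :=
              Finset.sum_eq_single (xs (i + 1)) (fun b' _ hb' => hedge i hiN b' hb')
                (by simp)
            rw [← hone, h2]
          · rw [if_neg hb, hsum, hedge i hiN b hb]
        constructor
        · intro a ha c
          have h0 : ∑ c, μ (i + 1) a c = 0 := by
            rw [← hflow i h a, hin a, if_neg ha]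
          exact (Finset.sum_eq_zero_iff_of_nonneg
            (fun c _ => hpos (i + 1) h a c)).mp h0 c (Finset.mem_univ c)
        · rw [← hflow i h (xs (i + 1)), hin, if_pos rfl]
    intro i hi a b
    obtain ⟨h1, h2⟩ := hinv i hi
    by_cases hab : a = xs i ∧ b = xs (i + 1)
    · rw [if_pos hab]
      obtain ⟨ha, hb⟩ := hab
      rw [ha, hb]
      have hone : ∑ b', μ i (xs i) b' = μ i (xs i) (xs (i + 1)) :=
        Finset.sum_eq_single (xs (i + 1)) (fun b' _ hb' => hedge i hi b' hb') (by simp)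
      rw [← hone, h2]
    · rw [if_neg hab]
      by_cases ha : a = xs i
      · subst ha
        have hb : b ≠ xs (i + 1) := fun h => hab ⟨rfl, h⟩
        exact hedge i hi b hb
      · exact h1 a ha b
end

section
/- Suppose ({μ_i}, {μ_{ij}}) is an optimal solution of the 2-marginal semidefinite relaxation of the pairwise minimization problem, and each μ_i is a delta measure, μ_i = δ_{x_i⋆}. Then x⋆ = (x₁⋆,…,x_N⋆} is a global minimizer of H(x) = ∑_{i<j} H_{ij}(x_i, x_j), and the SDP optimal value equals the true minimum E₀. -/
/-- Feasibility for the 2-marginal semidefinite relaxation: each `μi i` is a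
probability vector, the `μij i j` (for `i ≠ j`) are nonnegative, symmetric
under swapping `(i,a)` with `(j,b)`, locally consistent with the 1-marginals,
and the block matrix `G` (with diagonal blocks `diag (μi i)` and off-diagonal
blocks `μij i j`) is positive semidefinite. -/
def SDPFeasible {N : ℕ} {X : Fin N → Type*} [∀ i, Fintype (X i)]
    [∀ i, DecidableEq (X i)] [DecidableEq (Fin N)]
    (μi : ∀ i, X i → ℝ) (μij : ∀ i j, X i → X j → ℝ) : Prop :=
  (∀ i, (∀ a, 0 ≤ μi i a) ∧ (∑ a, μi i a) = 1) ∧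
  (∀ i j, i ≠ j → ∀ (a : X i) (b : X j), 0 ≤ μij i j a b) ∧
  (∀ i j, ∀ (a : X i) (b : X j), μij j i b a = μij i j a b) ∧
  (∀ i j, i ≠ j → (∀ a : X i, (∑ b, μij i j a b) = μi i a) ∧
    (∀ b : X j, (∑ a, μij i j a b) = μi j b)) ∧
  Matrix.PosSemidef (Matrix.of fun p q : Σ i, X i =>
    if h : p.1 = q.1 then
      (if p.2 = cast (congrArg X h.symm) q.2 then μi p.1 p.2 else 0)
    else μij p.1 q.1 p.2 q.2)

/-- Objective of the 2-marginal SDP. -/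
def SDPObj {N : ℕ} {X : Fin N → Type*} [∀ i, Fintype (X i)]
    (Hij : ∀ i j : Fin N, X i → X j → ℝ)
    (μij : ∀ i j, X i → X j → ℝ) : ℝ :=
  ∑ i, ∑ j, if i < j then (∑ a, ∑ b, Hij i j a b * μij i j a b) else 0


theorem stmt13 (N : ℕ) (X : Fin N → Type*)
    [∀ i, Fintype (X i)] [∀ i, DecidableEq (X i)] [∀ i, Nonempty (X i)]
    (Hij : ∀ i j : Fin N, X i → X j → ℝ)
    (μi : ∀ i, X i → ℝ) (μij : ∀ i j, X i → X j → ℝ)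
    (hfeas : SDPFeasible μi μij)
    (hopt : ∀ (νi : ∀ i, X i → ℝ) (νij : ∀ i j, X i → X j → ℝ),
      SDPFeasible νi νij → SDPObj Hij μij ≤ SDPObj Hij νij)
    (xs : ∀ i, X i)
    (hdelta : ∀ i a, μi i a = if a = xs i then 1 else 0) :
    (∀ y : ∀ i, X i,
      (∑ i, ∑ j, if i < j then Hij i j (xs i) (xs j) else 0)
        ≤ ∑ i, ∑ j, if i < j then Hij i j (y i) (y j) else 0) ∧
    SDPObj Hij μij = ∑ i, ∑ j, if i < j then Hij i j (xs i) (xs j) else 0 := by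
  obtain ⟨hprob, hpos, hsym, hcons, hpsd⟩ := hfeas
  -- Step 1: the pair marginals are forced to be products of deltas.
  have hval : ∀ i j, i ≠ j → ∀ (a : X i) (b : X j),
      μij i j a b = (if a = xs i then 1 else 0) * (if b = xs j then 1 else 0) := by
    intro i j hij a b
    have hrow := (hcons i j hij).1
    have hcol := (hcons i j hij).2
    by_cases ha : a = xs i
    · by_cases hb : b = xs j
      · subst ha; subst hb
        have h1 : (∑ b', μij i j (xs i) b') = 1 := by
          rw [hrow (xs i), hdelta]; simp
        have hz : ∀ b', b' ≠ xs j → μij i j (xs i) b' = 0 := by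
          intro b' hb'
          have hc : (∑ a', μij i j a' b') = 0 := by
            rw [hcol b', hdelta]; simp [hb']
          exact (Finset.sum_eq_zero_iff_of_nonneg
            (fun a' _ => hpos i j hij a' b')).mp hc (xs i) (Finset.mem_univ _)
        have hmain : μij i j (xs i) (xs j) = 1 := by
          calc μij i j (xs i) (xs j) = ∑ b', μij i j (xs i) b' := by
                rw [Finset.sum_eq_single (xs j)]
                · intro b' _ hb'; exact hz b' hb'
                · intro h; exact absurd (Finset.mem_univ _) h
            _ = 1 := h1
        simp [hmain]
      · have hc : (∑ a', μij i j a' b) = 0 := by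
          rw [hcol b, hdelta]; simp [hb]
        have h0 := (Finset.sum_eq_zero_iff_of_nonneg
          (fun a' _ => hpos i j hij a' b)).mp hc a (Finset.mem_univ _)
        simp [hb, h0]
    · have hr : (∑ b', μij i j a b') = 0 := by
        rw [hrow a, hdelta]; simp [ha]
      have h0 := (Finset.sum_eq_zero_iff_of_nonneg
        (fun b' _ => hpos i j hij a b')).mp hr b (Finset.mem_univ _)
      simp [ha, h0]
  -- Step 2: the SDP objective equals H(xs).
  have hobjμ : SDPObj Hij μij = ∑ i, ∑ j, if i < j then Hij i j (xs i) (xs j) else 0 := by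
    unfold SDPObj
    refine Finset.sum_congr rfl fun i _ => Finset.sum_congr rfl fun j _ => ?_
    by_cases hij : i < j
    · simp only [if_pos hij]
      have hne : i ≠ j := ne_of_lt hij
      have hterm : ∀ (a : X i) (b : X j),
          Hij i j a b * μij i j a b = if a = xs i ∧ b = xs j then Hij i j a b else 0 := by
        intro a b; rw [hval i j hne]
        by_cases h1 : a = xs i <;> by_cases h2 : b = xs j <;> simp [h1, h2]
      simp [hterm, ite_and, Finset.sum_ite_eq']
    · simp [hij]
  refine ⟨fun y => ?_, hobjμ⟩
  -- Step 3: the delta solution at y is feasible.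
  set v : (Σ i, X i) → ℝ := fun p => if p.2 = y p.1 then 1 else 0 with hv
  have hfeasy : SDPFeasible (fun i a => if a = y i then (1:ℝ) else 0)
      (fun i j a b => (if a = y i then (1:ℝ) else 0) * (if b = y j then 1 else 0)) := by
    refine ⟨fun i => ⟨fun a => by positivity, by simp⟩,
      fun i j _ a b => by positivity,
      fun i j a b => mul_comm _ _,
      fun i j _ => ⟨fun a => by rw [← Finset.mul_sum]; simp,
        fun b => by rw [← Finset.sum_mul]; simp⟩, ?_⟩
    have hM : (Matrix.of fun p q : Σ i, X i =>
        if h : p.1 = q.1 then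
          (if p.2 = cast (congrArg X h.symm) q.2 then (if p.2 = y p.1 then (1:ℝ) else 0) else 0)
        else (if p.2 = y p.1 then (1:ℝ) else 0) * (if q.2 = y q.1 then 1 else 0))
        = Matrix.of fun p q => v p * v q := by
      ext ⟨i, a⟩ ⟨j, b⟩
      simp only [Matrix.of_apply]
      by_cases h : i = j
      · subst h
        rw [dif_pos rfl]
        have hc : cast (congrArg X (rfl : i = i).symm) b = b := rfl
        rw [hc]
        by_cases hab : a = b
        · subst hab
          by_cases h1 : a = y i <;> simp [v, h1]
        · rw [if_neg hab]
          by_cases h1 : a = y i <;> by_cases h2 : b = y i <;> simp_all [v]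
      · rw [dif_neg h]
    rw [hM]
    rw [Matrix.posSemidef_iff_dotProduct_mulVec]
    constructor
    · ext p q
      simp [Matrix.conjTranspose_apply, mul_comm]
    · intro x
      have hmv : (Matrix.of fun p q => v p * v q).mulVec x
          = fun p => v p * (∑ q, v q * x q) := by
        ext p
        simp [Matrix.mulVec, dotProduct, Finset.mul_sum, mul_assoc]
      rw [hmv]
      have hdp : dotProduct (star x) (fun p => v p * (∑ q, v q * x q))
          = (∑ q, v q * x q) * (∑ q, v q * x q) := by
        simp only [dotProduct, Pi.star_apply, star_trivial]
        rw [Finset.sum_mul]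
        exact Finset.sum_congr rfl fun p _ => by ring
      rw [hdp]
      exact mul_self_nonneg _
  have hle := hopt _ _ hfeasy
  rw [hobjμ] at hle
  refine le_trans hle (le_of_eq ?_)
  unfold SDPObj
  refine Finset.sum_congr rfl fun i _ => Finset.sum_congr rfl fun j _ => ?_
  by_cases hij : i < j
  · simp only [if_pos hij]
    have hterm : ∀ (a : X i) (b : X j),
        Hij i j a b * ((if a = y i then (1:ℝ) else 0) * (if b = y j then 1 else 0))
          = if a = y i ∧ b = y j then Hij i j a b else 0 := by
      intro a b
      by_cases h1 : a = y i <;> by_cases h2 : b = y j <;> simp [h1, h2]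
    simp [hterm, ite_and, Finset.sum_ite_eq']
  · simp [hij]
end
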